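/- Let μ and μ_n (n ≥ 1) be elements of M_O. Then μ_n → μ in M_O if and only if lim_{n→∞} μ_n(A) = μ(A) for every Borel set A ⊆ O that is bounded away from C and satisfies μ(∂A) = 0, where ∂A denotes the topological boundary of A in S. -/

import Mathlib

open MeasureTheory Metric Filter Topology Set
open scoped ENNReal NNReal

noncomputable section

variable {S : Type*} [MetricSpace S] [MeasurableSpace S]

/-- `A` is bounded away from `C`: `A ⊆ S \ C^r` for some `r > 0`. -/
def BddAway (C A : Set S) : Prop := ∃ r > 0, ∀ x ∈ A, r ≤ infDist x C

/-- The class `C_O` of test functions: bounded, nonnegative, continuous on `O = S \ C`,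
and vanishing on `C^r` for some `r > 0` (extended by `0` to all of `S`). -/
def IsCO (C : Set S) (f : S → ℝ) : Prop :=
  ContinuousOn f Cᶜ ∧ (∀ x, 0 ≤ f x) ∧ (∃ B : ℝ, ∀ x, f x ≤ B) ∧
    ∃ r > 0, ∀ x, infDist x C < r → f x = 0

/-- The class `M_O`: Borel measures on `O = S \ C` (i.e. giving no mass to `C`)
that are finite on `S \ C^r` for each `r > 0`. -/
def MemMO (C : Set S) (μ : Measure S) : Prop :=
  μ C = 0 ∧ ∀ r : ℝ, 0 < r → μ {x | r ≤ infDist x C} < ⊤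

/-- Convergence `μ_n → μ` in `M_O`. -/
def MOTendsto (C : Set S) (μn : ℕ → Measure S) (μ : Measure S) : Prop :=
  ∀ f : S → ℝ, IsCO C f →
    Tendsto (fun n => ∫ x, f x ∂ μn n) atTop (𝓝 (∫ x, f x ∂ μ))

section Aux

variable {C : Set S}

lemma G_closed (C : Set S) (r : ℝ) : IsClosed {x : S | r ≤ infDist x C} :=
  isClosed_le continuous_const (continuous_infDist_pt C)

lemma notin_of_le {x : S} {r : ℝ} (hr : 0 < r) (hx : r ≤ infDist x C) : x ∈ Cᶜ := by
  intro hxC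
  rw [infDist_zero_of_mem hxC] at hx
  exact hr.not_ge hx

variable [BorelSpace S]

lemma isCO_measurable (hC : IsClosed C) {f : S → ℝ} (hf : IsCO C f) : Measurable f := by
  obtain ⟨hcont, hnn, _, r, hr, hvan⟩ := hf
  apply measurable_of_Ioi
  intro t
  rcases lt_or_ge t 0 with ht | ht
  · have : f ⁻¹' Ioi t = univ := eq_univ_of_forall fun x => ht.trans_le (hnn x)
    rw [this]; exact MeasurableSet.univ
  · apply IsOpen.measurableSet
    rw [isOpen_iff_mem_nhds]
    intro x hx
    have hfx : t < f x := hx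
    have hxr : r ≤ infDist x C := by
      by_contra hcon
      rw [hvan x (not_le.1 hcon)] at hfx
      exact absurd hfx (not_lt.2 ht)
    have hxC : x ∈ Cᶜ := notin_of_le hr hxr
    exact (hcont.continuousAt (hC.isOpen_compl.mem_nhds hxC)) (Ioi_mem_nhds hfx)

lemma isCO_lintegral_ne_top {f : S → ℝ} {ν : Measure S} (hf : IsCO C f) (hν : MemMO C ν) :
    ∫⁻ x, ENNReal.ofReal (f x) ∂ν ≠ ⊤ := by
  obtain ⟨hcont, hnn, ⟨B, hB⟩, r, hr, hvan⟩ := hf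
  have hle : ∀ x, ENNReal.ofReal (f x)
      ≤ {x : S | r ≤ infDist x C}.indicator (fun _ => ENNReal.ofReal B) x := by
    intro x
    by_cases hx : r ≤ infDist x C
    · have hxm : x ∈ {x : S | r ≤ infDist x C} := hx
      rw [Set.indicator_of_mem hxm]
      exact ENNReal.ofReal_le_ofReal (hB x)
    · rw [hvan x (not_le.1 hx)]; simp
  refine ne_top_of_le_ne_top ?_ (lintegral_mono hle)
  rw [lintegral_indicator_const (G_closed C r).measurableSet]
  exact (ENNReal.mul_lt_top ENNReal.ofReal_lt_top (hν.2 r hr)).ne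

lemma isCO_integrable (hC : IsClosed C) {f : S → ℝ} {ν : Measure S}
    (hf : IsCO C f) (hν : MemMO C ν) : Integrable f ν := by
  refine ⟨(isCO_measurable hC hf).aestronglyMeasurable, ?_⟩
  have : ∫⁻ x, ‖f x‖ₑ ∂ν = ∫⁻ x, ENNReal.ofReal (f x) ∂ν :=
    lintegral_congr fun x => Real.enorm_eq_ofReal (hf.2.1 x)
  rw [HasFiniteIntegral, this]
  exact (isCO_lintegral_ne_top hf hν).lt_top

lemma isCO_integral_eq (hC : IsClosed C) {f : S → ℝ} {ν : Measure S}
    (hf : IsCO C f) (hν : MemMO C ν) :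
    ENNReal.ofReal (∫ x, f x ∂ν) = ∫⁻ x, ENNReal.ofReal (f x) ∂ν :=
  ofReal_integral_eq_lintegral_ofReal (isCO_integrable hC hf hν)
    (Filter.Eventually.of_forall hf.2.1)

lemma MOTendsto.lintegral_tendsto (hC : IsClosed C) {μ : Measure S} {μn : ℕ → Measure S}
    (hμ : MemMO C μ) (hμn : ∀ n, MemMO C (μn n)) (h : MOTendsto C μn μ)
    {f : S → ℝ} (hf : IsCO C f) :
    Tendsto (fun n => ∫⁻ x, ENNReal.ofReal (f x) ∂ μn n) atTop
      (𝓝 (∫⁻ x, ENNReal.ofReal (f x) ∂ μ)) := by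
  have h2 := (ENNReal.continuous_ofReal.tendsto _).comp (h f hf)
  have e : ∀ n, ENNReal.ofReal (∫ x, f x ∂ μn n) = ∫⁻ x, ENNReal.ofReal (f x) ∂ μn n :=
    fun n => isCO_integral_eq hC hf (hμn n)
  simpa only [Function.comp_def, e, isCO_integral_eq hC hf hμ] using h2

lemma tendsto_integral_of_lintegral (hC : IsClosed C) {μ : Measure S} {μn : ℕ → Measure S}
    (hμ : MemMO C μ) (hμn : ∀ n, MemMO C (μn n)) {f : S → ℝ} (hf : IsCO C f)
    (h : Tendsto (fun n => ∫⁻ x, ENNReal.ofReal (f x) ∂ μn n) atTop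
      (𝓝 (∫⁻ x, ENNReal.ofReal (f x) ∂ μ))) :
    Tendsto (fun n => ∫ x, f x ∂ μn n) atTop (𝓝 (∫ x, f x ∂ μ)) := by
  have h2 := (ENNReal.tendsto_toReal (isCO_lintegral_ne_top hf hμ)).comp h
  have e : ∀ ν : Measure S, MemMO C ν →
      ∫ x, f x ∂ν = (∫⁻ x, ENNReal.ofReal (f x) ∂ν).toReal := by
    intro ν hν
    rw [← isCO_integral_eq hC hf hν, ENNReal.toReal_ofReal (integral_nonneg hf.2.1)]
  have e2 : (fun n => ∫ x, f x ∂ μn n)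
      = fun n => (∫⁻ x, ENNReal.ofReal (f x) ∂ μn n).toReal :=
    funext fun n => e _ (hμn n)
  rw [e2, e μ hμ]
  exact h2

end Aux

section Forward

variable [BorelSpace S] {C : Set S}

lemma forward_dir (hC : IsClosed C) {μ : Measure S} {μn : ℕ → Measure S}
    (hμ : MemMO C μ) (hμn : ∀ n, MemMO C (μn n)) (h : MOTendsto C μn μ)
    (A : Set S) (hAm : MeasurableSet A) (hbdd : BddAway C A) (hfr : μ (frontier A) = 0) :
    Tendsto (fun n => μn n A) atTop (𝓝 (μ A)) := by
  obtain ⟨r, hr, hA⟩ := hbdd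
  rcases eq_empty_or_nonempty A with rfl | hAne
  · simpa using tendsto_const_nhds
  have hGc : IsClosed {x : S | r ≤ infDist x C} := G_closed C r
  have hFG : closure A ⊆ {x : S | r ≤ infDist x C} := closure_minimal hA hGc
  have hFne : (closure A).Nonempty := hAne.closure
  have hμF : μ (closure A) = μ A := by
    apply le_antisymm
    · calc μ (closure A) ≤ μ (A ∪ frontier A) := measure_mono (by
            rw [closure_eq_interior_union_frontier]
            exact union_subset_union_left _ interior_subset)
        _ ≤ μ A + μ (frontier A) := measure_union_le _ _
        _ = μ A := by rw [hfr, add_zero]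
    · exact measure_mono subset_closure
  have hμU : μ (interior A) = μ A := by
    apply le_antisymm (measure_mono interior_subset)
    calc μ A ≤ μ (interior A ∪ frontier A) := measure_mono (by
          rw [← closure_eq_interior_union_frontier]; exact subset_closure)
      _ ≤ μ (interior A) + μ (frontier A) := measure_union_le _ _
      _ = μ (interior A) := by rw [hfr, add_zero]
  -- upper bound: limsup μn A ≤ μ A
  set δ : ℕ → ℝ := fun k => r / (k + 2) with hδ
  have hδpos : ∀ k, 0 < δ k := fun k => div_pos hr (by positivity)
  have hδlt : ∀ k, δ k ≤ r / 2 := fun k => by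
    rw [hδ]
    apply div_le_div_of_nonneg_left hr.le two_pos
    · norm_num
  have hδantitone : ∀ k l, k ≤ l → δ l ≤ δ k := by
    intro k l hkl
    apply div_le_div_of_nonneg_left hr.le (by positivity)
    · have : (k:ℝ) ≤ l := Nat.cast_le.2 hkl
      linarith
  set g : ℕ → S → ℝ := fun k x => max 0 (1 - infDist x (closure A) / δ k) with hg
  have hgco : ∀ k, IsCO C (g k) := by
    intro k
    refine ⟨(Continuous.continuousOn ?_), fun x => le_max_left _ _, ⟨1, fun x => ?_⟩,
      r - δ k, by linarith [hδlt k, hr], fun x hx => ?_⟩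
    · exact continuous_const.max
        (continuous_const.sub ((continuous_infDist_pt _).div_const _))
    · apply max_le zero_le_one
      have : 0 ≤ infDist x (closure A) / δ k :=
        div_nonneg infDist_nonneg (hδpos k).le
      linarith
    · -- vanishing
      have hdist : δ k ≤ infDist x (closure A) := by
        by_contra hcon
        obtain ⟨y, hyF, hxy⟩ := (infDist_lt_iff hFne).1 (not_le.1 hcon)
        have h1 : r ≤ infDist y C := hFG hyF
        have h2 : infDist y C ≤ infDist x C + dist y x := infDist_le_infDist_add_dist
        rw [dist_comm] at h2
        linarith
      have h1 : 1 - infDist x (closure A) / δ k ≤ 0 := by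
        have := (one_le_div (hδpos k)).2 hdist
        linarith
      simp only [hg]
      exact max_eq_left h1
  have hgF : ∀ k x, x ∈ closure A → 1 ≤ g k x := by
    intro k x hx
    rw [hg]
    simp only [infDist_zero_of_mem hx, zero_div, sub_zero]
    exact (le_max_right _ _)
  have hgmeas : ∀ k, Measurable fun x => ENNReal.ofReal (g k x) :=
    fun k => (isCO_measurable hC (hgco k)).ennreal_ofReal
  have hganti : Antitone fun k => fun x => ENNReal.ofReal (g k x) := by
    intro k l hkl
    intro x
    apply ENNReal.ofReal_le_ofReal
    apply max_le_max le_rfl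
    have h1 : infDist x (closure A) / δ k ≤ infDist x (closure A) / δ l :=
      div_le_div_of_nonneg_left infDist_nonneg (hδpos l) (hδantitone k l hkl)
    linarith
  have hginf : ∀ x, (⨅ k, ENNReal.ofReal (g k x)) = (closure A).indicator 1 x := by
    intro x
    by_cases hx : x ∈ closure A
    · rw [indicator_of_mem hx, Pi.one_apply]
      apply le_antisymm
      · refine iInf_le_of_le 0 ?_
        rw [hg]
        simp [infDist_zero_of_mem hx]
      · refine le_iInf fun k => ?_
        rw [show (1 : ℝ≥0∞) = ENNReal.ofReal 1 by simp]
        exact ENNReal.ofReal_le_ofReal (hgF k x hx)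
    · rw [indicator_of_notMem hx]
      have hd : 0 < infDist x (closure A) :=
        (isClosed_closure.notMem_iff_infDist_pos hFne).1 hx
      obtain ⟨k, hk⟩ := exists_nat_gt (r / infDist x (closure A))
      apply le_antisymm _ zero_le
      refine iInf_le_of_le k (le_of_eq ?_)
      have hdk : δ k ≤ infDist x (closure A) := by
        rw [hδ, div_le_iff₀ (by positivity)]
        rw [div_lt_iff₀ hd] at hk
        nlinarith [infDist_nonneg (x := x) (s := closure A)]
      have h1 : 1 - infDist x (closure A) / δ k ≤ 0 := by
        have := (one_le_div (hδpos k)).2 hdk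
        linarith
      simp only [hg]
      rw [max_eq_left h1, ENNReal.ofReal_zero]
  have hg0fin : ∫⁻ x, ENNReal.ofReal (g 0 x) ∂μ ≠ ⊤ := isCO_lintegral_ne_top (hgco 0) hμ
  have hinf_eq : (⨅ k, ∫⁻ x, ENNReal.ofReal (g k x) ∂μ) = μ A := by
    rw [← lintegral_iInf hgmeas hganti hg0fin]
    calc ∫⁻ x, ⨅ k, ENNReal.ofReal (g k x) ∂μ
        = ∫⁻ x, (closure A).indicator 1 x ∂μ := lintegral_congr hginf
      _ = μ (closure A) := lintegral_indicator_one isClosed_closure.measurableSet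
      _ = μ A := hμF
  have key_up : limsup (fun n => μn n A) atTop ≤ μ A := by
    have hle : ∀ k, limsup (fun n => μn n A) atTop ≤ ∫⁻ x, ENNReal.ofReal (g k x) ∂μ := by
      intro k
      have ht := MOTendsto.lintegral_tendsto hC hμ hμn h (hgco k)
      rw [← ht.limsup_eq]
      apply limsup_le_limsup (Eventually.of_forall fun n => ?_)
      calc μn n A ≤ μn n (closure A) := measure_mono subset_closure
        _ = ∫⁻ x, (closure A).indicator 1 x ∂ μn n :=
            (lintegral_indicator_one isClosed_closure.measurableSet).symm
        _ ≤ ∫⁻ x, ENNReal.ofReal (g k x) ∂ μn n := by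
            apply lintegral_mono fun x => ?_
            by_cases hx : x ∈ closure A
            · rw [indicator_of_mem hx, Pi.one_apply]
              calc (1 : ℝ≥0∞) = ENNReal.ofReal 1 := by simp
                _ ≤ ENNReal.ofReal (g k x) := ENNReal.ofReal_le_ofReal (hgF k x hx)
            · rw [indicator_of_notMem hx]; exact zero_le
    calc limsup (fun n => μn n A) atTop ≤ ⨅ k, ∫⁻ x, ENNReal.ofReal (g k x) ∂μ := le_iInf hle
      _ = μ A := hinf_eq
  -- lower bound
  have hUcne : (interior A)ᶜ.Nonempty := by
    by_contra hemp
    rw [not_nonempty_iff_eq_empty, compl_empty_iff] at hemp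
    obtain ⟨a, ha⟩ := hAne
    by_cases hCe : C = ∅
    · have := hA a ha
      rw [hCe, infDist_empty] at this
      exact hr.not_ge this
    · obtain ⟨c, hc⟩ := nonempty_iff_ne_empty.2 hCe
      have hcA : c ∈ A := interior_subset (hemp ▸ (mem_univ c))
      have := hA c hcA
      rw [infDist_zero_of_mem hc] at this
      exact hr.not_ge this
  set p : ℕ → S → ℝ := fun k x => min 1 ((k + 1) * infDist x (interior A)ᶜ) with hp
  have hpco : ∀ k, IsCO C (p k) := by
    intro k
    refine ⟨Continuous.continuousOn ?_,
      fun x => le_min zero_le_one (mul_nonneg (by positivity) infDist_nonneg), ⟨1, fun x => min_le_left _ _⟩,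
      r, hr, fun x hx => ?_⟩
    · exact continuous_const.min (continuous_const.mul (continuous_infDist_pt _))
    · rw [hp]
      have hxU : x ∈ (interior A)ᶜ := by
        intro hxmem
        exact (not_le.2 hx) (hA x (interior_subset hxmem))
      simp [infDist_zero_of_mem hxU]
  have hpmeas : ∀ k, Measurable fun x => ENNReal.ofReal (p k x) :=
    fun k => (isCO_measurable hC (hpco k)).ennreal_ofReal
  have hpmono : Monotone fun k => fun x => ENNReal.ofReal (p k x) := by
    intro k l hkl x
    apply ENNReal.ofReal_le_ofReal
    apply min_le_min le_rfl
    apply mul_le_mul_of_nonneg_right _ infDist_nonneg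
    have : (k:ℝ) ≤ l := Nat.cast_le.2 hkl
    linarith
  have hpleA : ∀ k x, ENNReal.ofReal (p k x) ≤ A.indicator 1 x := by
    intro k x
    by_cases hx : x ∈ A
    · rw [indicator_of_mem hx, Pi.one_apply]
      calc ENNReal.ofReal (p k x) ≤ ENNReal.ofReal 1 :=
          ENNReal.ofReal_le_ofReal (min_le_left _ _)
        _ = 1 := by simp
    · rw [indicator_of_notMem hx]
      have hxU : x ∈ (interior A)ᶜ := fun hxm => hx (interior_subset hxm)
      rw [hp]
      simp [infDist_zero_of_mem hxU]
  have hpsup : ∀ x, (⨆ k, ENNReal.ofReal (p k x)) = (interior A).indicator 1 x := by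
    intro x
    by_cases hx : x ∈ interior A
    · rw [indicator_of_mem hx, Pi.one_apply]
      have hd : 0 < infDist x (interior A)ᶜ :=
        (isOpen_interior.isClosed_compl.notMem_iff_infDist_pos hUcne).1 (by simpa using hx)
      obtain ⟨k, hk⟩ := exists_nat_gt (1 / infDist x (interior A)ᶜ)
      apply le_antisymm
      · refine iSup_le fun k => ?_
        calc ENNReal.ofReal (p k x) ≤ ENNReal.ofReal 1 :=
            ENNReal.ofReal_le_ofReal (min_le_left _ _)
          _ = 1 := by simp
      · refine le_iSup_of_le k ?_
        have h1 : 1 ≤ (k + 1) * infDist x (interior A)ᶜ := by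
          rw [div_lt_iff₀ hd] at hk
          nlinarith
        have hpk : p k x = 1 := by simp only [hp]; exact min_eq_left h1
        rw [hpk]; simp
    · rw [indicator_of_notMem hx]
      have hxU : x ∈ (interior A)ᶜ := hx
      apply le_antisymm _ zero_le
      refine iSup_le fun k => ?_
      rw [hp]
      simp [infDist_zero_of_mem hxU]
  have hsup_eq : (⨆ k, ∫⁻ x, ENNReal.ofReal (p k x) ∂μ) = μ A := by
    rw [← lintegral_iSup hpmeas hpmono]
    calc ∫⁻ x, ⨆ k, ENNReal.ofReal (p k x) ∂μ
        = ∫⁻ x, (interior A).indicator 1 x ∂μ := lintegral_congr hpsup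
      _ = μ (interior A) := lintegral_indicator_one isOpen_interior.measurableSet
      _ = μ A := hμU
  have key_lo : μ A ≤ liminf (fun n => μn n A) atTop := by
    rw [← hsup_eq]
    refine iSup_le fun k => ?_
    have ht := MOTendsto.lintegral_tendsto hC hμ hμn h (hpco k)
    rw [← ht.liminf_eq]
    apply liminf_le_liminf (Eventually.of_forall fun n => ?_)
    calc ∫⁻ x, ENNReal.ofReal (p k x) ∂ μn n
        ≤ ∫⁻ x, A.indicator 1 x ∂ μn n := lintegral_mono (hpleA k)
      _ = μn n A := lintegral_indicator_one hAm
  exact tendsto_of_le_liminf_of_limsup_le key_lo key_up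

end Forward

section Backward

variable [BorelSpace S] {C : Set S}

lemma backward_dir (hC : IsClosed C) {μ : Measure S} {μn : ℕ → Measure S}
    (hμ : MemMO C μ) (hμn : ∀ n, MemMO C (μn n))
    (h : ∀ A : Set S, MeasurableSet A → A ⊆ Cᶜ → BddAway C A → μ (frontier A) = 0 →
      Tendsto (fun n => μn n A) atTop (𝓝 (μ A))) :
    MOTendsto C μn μ := by
  intro f hf
  apply tendsto_integral_of_lintegral hC hμ hμn hf
  obtain ⟨hcont, hnn, ⟨B, hB⟩, r, hr, hvan⟩ := hf
  have hfmeas : Measurable f := isCO_measurable hC ⟨hcont, hnn, ⟨B, hB⟩, r, hr, hvan⟩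
  set E : ℝ → Set S := fun t => {x | t < f x} with hE
  have hEG : ∀ t, 0 ≤ t → E t ⊆ {x | r ≤ infDist x C} := by
    intro t ht x hx
    by_contra hcon
    have hz := hvan x (not_le.1 hcon)
    have hx' : t < f x := hx
    rw [hz] at hx'
    exact (not_lt.2 ht) hx'
  have hEopen : ∀ t, 0 ≤ t → IsOpen (E t) := by
    intro t ht
    rw [isOpen_iff_mem_nhds]
    intro x hx
    have hxC : x ∈ Cᶜ := notin_of_le hr (hEG t ht hx)
    exact (hcont.continuousAt (hC.isOpen_compl.mem_nhds hxC)) (Ioi_mem_nhds hx)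
  have hfrsub : ∀ t, 0 ≤ t → frontier (E t) ⊆ {x | f x = t} ∩ {x | r ≤ infDist x C} := by
    intro t ht
    have hK : IsClosed ({x : S | r ≤ infDist x C} ∩ f ⁻¹' Ici t) :=
      ContinuousOn.preimage_isClosed_of_isClosed
        (hcont.mono fun x hx => notin_of_le hr hx) (G_closed C r) isClosed_Ici
    have hEK : E t ⊆ {x : S | r ≤ infDist x C} ∩ f ⁻¹' Ici t :=
      fun x hx => ⟨hEG t ht hx, le_of_lt (show t < f x from hx)⟩
    intro x hx
    rw [(hEopen t ht).frontier_eq] at hx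
    obtain ⟨hx1, hx2⟩ := hx
    have hxK := closure_minimal hEK hK hx1
    exact ⟨le_antisymm (not_lt.1 hx2) hxK.2, hxK.1⟩
  have hGfin : μ {x | r ≤ infDist x C} ≠ ⊤ := (hμ.2 r hr).ne
  have hbadcount :
      Set.Countable {t : ℝ | 0 < μ ({x | f x = t} ∩ {x | r ≤ infDist x C})} := by
    apply Measure.countable_meas_pos_of_disjoint_of_meas_iUnion_ne_top μ
      (As := fun t : ℝ => {x | f x = t} ∩ {x | r ≤ infDist x C})
    · intro t
      exact (hfmeas (measurableSet_singleton t)).inter (G_closed C r).measurableSet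
    · intro s t hst
      refine Set.disjoint_left.2 fun x hx1 hx2 => hst ?_
      rw [← hx1.1, ← hx2.1]
    · refine ne_top_of_le_ne_top hGfin (measure_mono ?_)
      exact iUnion_subset fun t => inter_subset_right
  have hconvt : ∀ t : ℝ, 0 < t → μ ({x | f x = t} ∩ {x | r ≤ infDist x C}) = 0 →
      Tendsto (fun n => μn n (E t)) atTop (𝓝 (μ (E t))) := by
    intro t ht hnull
    apply h (E t) (hEopen t ht.le).measurableSet
      (fun x hx => notin_of_le hr (hEG t ht.le hx)) ⟨r, hr, fun x hx => hEG t ht.le hx⟩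
    exact measure_mono_null (hfrsub t ht.le) hnull
  -- choice of r' with null level set
  obtain ⟨r', hr'mem, hr'null⟩ : ∃ r' ∈ Ioo (r/2) r, μ {x | infDist x C = r'} = 0 := by
    have hmeas : ∀ s : Ioo (r/2) r, MeasurableSet {x : S | infDist x C = s.1} :=
      fun s => (continuous_infDist_pt C).measurable (measurableSet_singleton _)
    have hdisj : Pairwise (Function.onFun Disjoint fun s : Ioo (r/2) r => {x : S | infDist x C = s.1}) := by
      intro s t hst
      refine Set.disjoint_left.2 fun x hx1 hx2 => hst (Subtype.ext ?_)
      rw [← hx1, ← hx2]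
    have hfin : μ (⋃ s : Ioo (r/2) r, {x : S | infDist x C = s.1}) ≠ ⊤ := by
      refine ne_top_of_le_ne_top (hμ.2 (r/2) (by linarith)).ne (measure_mono ?_)
      refine iUnion_subset fun s x hx => ?_
      have hxs : infDist x C = s.1 := hx
      rw [mem_setOf_eq, hxs]
      exact s.2.1.le
    have hcnt := Measure.countable_meas_pos_of_disjoint_of_meas_iUnion_ne_top μ hmeas hdisj hfin
    have hbadc : (Subtype.val '' {s : Ioo (r/2) r | 0 < μ {x : S | infDist x C = s.1}}).Countable :=
      hcnt.image _
    by_contra hcon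
    push_neg at hcon
    have hsub : Ioo (r/2) r ⊆
        Subtype.val '' {s : Ioo (r/2) r | 0 < μ {x : S | infDist x C = s.1}} := by
      intro s hs
      exact ⟨⟨s, hs⟩, pos_iff_ne_zero.2 (hcon s hs), rfl⟩
    have hvol : volume (Ioo (r/2) r) = 0 :=
      measure_mono_null hsub (hbadc.measure_zero _)
    rw [Real.volume_Ioo] at hvol
    rw [ENNReal.ofReal_eq_zero] at hvol
    linarith
  have hr'pos : 0 < r' := lt_trans (by linarith : (0:ℝ) < r/2) hr'mem.1
  -- uniform bound on μn {x | r' ≤ infDist x C}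
  have hGr' : Tendsto (fun n => μn n {x | r' ≤ infDist x C}) atTop
      (𝓝 (μ {x | r' ≤ infDist x C})) := by
    apply h _ (G_closed C r').measurableSet (fun x hx => notin_of_le hr'pos hx)
      ⟨r', hr'pos, fun x hx => hx⟩
    refine measure_mono_null ?_ hr'null
    have hpre : {x : S | r' ≤ infDist x C} = (fun x => infDist x C) ⁻¹' Ici r' := rfl
    rw [hpre]
    refine ((continuous_infDist_pt C).frontier_preimage_subset (Ici r')).trans ?_
    rw [frontier_Ici]
    exact fun x hx => hx
  have hμA' : μ {x | r' ≤ infDist x C} ≠ ⊤ := (hμ.2 r' hr'pos).ne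
  have hev : ∀ᶠ n in atTop,
      μn n {x | r' ≤ infDist x C} < μ {x | r' ≤ infDist x C} + 1 :=
    hGr'.eventually_lt_const (ENNReal.lt_add_right hμA' one_ne_zero)
  obtain ⟨N, hN⟩ := eventually_atTop.1 hev
  set M : ℝ≥0∞ := (μ {x | r' ≤ infDist x C} + 1)
    ⊔ (Finset.range N).sup (fun n => μn n {x | r' ≤ infDist x C}) with hM
  have hMle : ∀ n, μn n {x | r' ≤ infDist x C} ≤ M := by
    intro n
    rcases lt_or_ge n N with hn | hn
    · exact le_sup_of_le_right (Finset.le_sup (f := fun n => μn n {x | r' ≤ infDist x C}) (Finset.mem_range.2 hn))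
    · exact le_sup_of_le_left (hN n hn).le
  have hMtop : M ≠ ⊤ := by
    rw [hM]
    refine (max_lt ?_ ?_).ne
    · exact ENNReal.add_lt_top.2 ⟨lt_top_iff_ne_top.2 hμA', ENNReal.one_lt_top⟩
    · exact (Finset.sup_lt_iff (by simp)).2 fun n _ => (hμn n).2 r' hr'pos
  have hEM : ∀ t : ℝ, 0 < t → ∀ n, μn n (E t) ≤ M := by
    intro t ht n
    refine le_trans (measure_mono fun x hx => ?_) (hMle n)
    exact le_trans hr'mem.2.le (hEG t ht.le hx)
  set B' : ℝ := max B 0 with hB'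
  have hEempty : ∀ t, B' < t → E t = ∅ := by
    intro t ht
    rw [hE, eq_empty_iff_forall_notMem]
    intro x hx
    have hx' : t < f x := hx
    have hfB : f x ≤ B' := le_trans (hB x) (le_max_left _ _)
    linarith
  have hrepr : ∀ ν : Measure S, MemMO C ν →
      ∫⁻ x, ENNReal.ofReal (f x) ∂ν = ∫⁻ t in Ioc 0 B', ν (E t) := by
    intro ν hν
    rw [lintegral_eq_lintegral_meas_lt ν (Eventually.of_forall hnn) hfmeas.aemeasurable]
    rw [← Ioc_union_Ioi_eq_Ioi (le_max_right B 0),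
      lintegral_union measurableSet_Ioi Ioc_disjoint_Ioi_same]
    have hz : ∫⁻ t in Ioi B', ν {x | t < f x} = 0 := by
      calc ∫⁻ t in Ioi B', ν {x | t < f x} = ∫⁻ _ in Ioi B', (0:ℝ≥0∞) :=
          setLIntegral_congr_fun measurableSet_Ioi
            (fun t ht => by rw [show {x | t < f x} = E t from rfl, hEempty t ht, measure_empty])
        _ = 0 := lintegral_zero
    rw [hz, add_zero]
  rw [hrepr μ hμ]
  have e2 : ∀ n, ∫⁻ x, ENNReal.ofReal (f x) ∂ μn n = ∫⁻ t in Ioc 0 B', μn n (E t) :=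
    fun n => hrepr (μn n) (hμn n)
  simp only [e2]
  apply tendsto_lintegral_of_dominated_convergence (bound := fun _ => M)
  · exact fun n => Antitone.measurable fun s t hst =>
      measure_mono fun x hx => lt_of_le_of_lt hst hx
  · intro n
    filter_upwards [ae_restrict_mem measurableSet_Ioc] with t ht
    exact hEM t ht.1 n
  · rw [lintegral_const, Measure.restrict_apply MeasurableSet.univ, univ_inter, Real.volume_Ioc]
    exact ENNReal.mul_ne_top hMtop ENNReal.ofReal_ne_top
  · have h1 : ∀ᵐ t ∂(volume.restrict (Ioc 0 B')),
        t ∉ {t : ℝ | 0 < μ ({x | f x = t} ∩ {x | r ≤ infDist x C})} :=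
      ae_restrict_of_ae (measure_eq_zero_iff_ae_notMem.1 (hbadcount.measure_zero _))
    filter_upwards [ae_restrict_mem measurableSet_Ioc, h1] with t ht hbad
    exact hconvt t ht.1 (le_zero_iff.1 (not_lt.1 hbad))

end Backward

/-- Portmanteau (i) ⟺ (iv): `μ_n → μ` in `M_O` iff `μ_n(A) → μ(A)` for every Borel
set `A ⊆ O` bounded away from `C` with `μ(∂A) = 0`. -/
theorem stmt2 [BorelSpace S] [CompleteSpace S] [TopologicalSpace.SeparableSpace S]
    (C : Set S) (hC : IsClosed C)
    (μ : Measure S) (μn : ℕ → Measure S)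
    (hμ : MemMO C μ) (hμn : ∀ n, MemMO C (μn n)) :
    MOTendsto C μn μ ↔
      ∀ A : Set S, MeasurableSet A → A ⊆ Cᶜ → BddAway C A → μ (frontier A) = 0 →
        Tendsto (fun n => μn n A) atTop (𝓝 (μ A)) := by
  constructor
  · intro h A hAm _ hbdd hfr
    exact forward_dir hC hμ hμn h A hAm hbdd hfr
  · intro h
    exact backward_dir hC hμ hμn h
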